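/- Let P be a simple polytope of dimension d > 1, let u, v be complementary vertices of P, and let x be any vertex of P adjacent to v. Then u and x have at most one facet of P in common, no single facet of P contains all three vertices u, v, x, and the set of facets of P containing the vertex u or containing the edge joining v and x consists of all facets touching u or v except the unique facet that contains v but not x; in particular it has exactly 2d − 1 elements. -/

import Mathlib

/-- `P` is a polytope: the convex hull of finitely many points. -/
def IsPolytope {n : ℕ} (P : Set (Fin n → ℝ)) : Prop :=
  ∃ S : Finset (Fin n → ℝ), P = convexHull ℝ (S : Set (Fin n → ℝ))

/-- A face of `P`: the empty set, `P` itself, or the intersection of `P`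
with a supporting hyperplane. -/
def IsFace {n : ℕ} (P F : Set (Fin n → ℝ)) : Prop :=
  F = ∅ ∨ F = P ∨ ∃ (f : (Fin n → ℝ) →ₗ[ℝ] ℝ) (c : ℝ),
    (∀ x ∈ P, f x ≤ c) ∧ F = {x ∈ P | f x = c}

/-- The dimension of a subset of `ℝⁿ`: the rank of its vector span
(i.e., its affine dimension). -/
noncomputable def sdim {n : ℕ} (F : Set (Fin n → ℝ)) : ℕ :=
  Module.finrank ℝ ↥(vectorSpan ℝ F)

/-- A vertex of `P`: a point whose singleton is a (0-dimensional) face of `P`. -/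
def IsVertex {n : ℕ} (P : Set (Fin n → ℝ)) (v : Fin n → ℝ) : Prop :=
  IsFace P {v}

/-- A facet of `P`: a nonempty face of dimension `dim P - 1`. -/
def IsFacet {n : ℕ} (P F : Set (Fin n → ℝ)) : Prop :=
  IsFace P F ∧ F.Nonempty ∧ sdim F + 1 = sdim P

/-- An edge of `P`: a face of dimension 1. -/
def IsEdge {n : ℕ} (P F : Set (Fin n → ℝ)) : Prop :=
  IsFace P F ∧ sdim F = 1

/-- Two vertices are adjacent if they are joined by an edge. -/
def Adjacent {n : ℕ} (P : Set (Fin n → ℝ)) (u v : Fin n → ℝ) : Prop :=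
  u ≠ v ∧ ∃ F, IsEdge P F ∧ u ∈ F ∧ v ∈ F

/-- A polytope is simple if every vertex belongs to precisely `dim P` facets. -/
def IsSimplePolytope {n : ℕ} (P : Set (Fin n → ℝ)) : Prop :=
  ∀ v, IsVertex P v → {F | IsFacet P F ∧ v ∈ F}.ncard = sdim P

/-- A polytope is simplicial if every facet contains precisely `dim P` vertices. -/
def IsSimplicialPolytope {n : ℕ} (P : Set (Fin n → ℝ)) : Prop :=
  ∀ F, IsFacet P F → {v | IsVertex P v ∧ v ∈ F}.ncard = sdim P

/-- Two vertices are complementary if no facet contains both. -/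
def Complementary {n : ℕ} (P : Set (Fin n → ℝ)) (u v : Fin n → ℝ) : Prop :=
  ∀ F, IsFacet P F → ¬ (u ∈ F ∧ v ∈ F)

/-- `J` is the join `F ∨ G`: the smallest face of `P` containing both `F` and `G`. -/
def IsJoin {n : ℕ} (P F G J : Set (Fin n → ℝ)) : Prop :=
  IsFace P J ∧ F ⊆ J ∧ G ⊆ J ∧ ∀ J', IsFace P J' → F ⊆ J' → G ⊆ J' → J ⊆ J'

open Classical in
noncomputable def tightSet {n : ℕ} (S : Finset (Fin n → ℝ)) (ℓ : (Fin n → ℝ) →ₗ[ℝ] ℝ) (c : ℝ) :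
    Finset (Fin n → ℝ) :=
  S.filter (fun s => ℓ s = c)

lemma mem_tightSet {n : ℕ} {S : Finset (Fin n → ℝ)} {ℓ : (Fin n → ℝ) →ₗ[ℝ] ℝ} {c : ℝ}
    {s : Fin n → ℝ} : s ∈ tightSet S ℓ c ↔ s ∈ S ∧ ℓ s = c := by
  classical
  simp [tightSet]

/-- The tight-face lemma: the face cut out by a supporting functional is the convex hull
of the tight points. -/
lemma face_eq_convexHull_tightSet {n : ℕ} (S : Finset (Fin n → ℝ))
    (ℓ : (Fin n → ℝ) →ₗ[ℝ] ℝ) (c : ℝ) (hsupp : ∀ s ∈ S, ℓ s ≤ c) :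
    {p ∈ convexHull ℝ (S : Set (Fin n → ℝ)) | ℓ p = c} =
      convexHull ℝ ((tightSet S ℓ c : Finset (Fin n → ℝ)) : Set (Fin n → ℝ)) := by
  apply Set.Subset.antisymm
  · rintro p ⟨hpP, hpc⟩
    rw [Finset.convexHull_eq] at hpP
    obtain ⟨w, hw0, hw1, hwc⟩ := hpP
    -- all weight is on tight points
    have hkey : ∀ s ∈ S, s ∉ tightSet S ℓ c → w s = 0 := by
      intro s hs hns
      by_contra hws
      have hws' : 0 < w s := lt_of_le_of_ne (hw0 s hs) (Ne.symm hws)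
      have hlt : ℓ s < c := lt_of_le_of_ne (hsupp s hs) (fun h => hns (mem_tightSet.2 ⟨hs, h⟩))
      -- ℓ p = ∑ w y • ℓ y < c
      have hsum : ∑ y ∈ S, w y * ℓ y = c := by
        have := hwc
        rw [Finset.centerMass_eq_of_sum_1 _ _ hw1] at this
        calc ∑ y ∈ S, w y * ℓ y = ℓ (∑ y ∈ S, w y • id y) := by
              rw [map_sum]; simp [smul_eq_mul, mul_comm]
          _ = ℓ p := by rw [this]
          _ = c := hpc
      have hlt' : ∑ y ∈ S, w y * ℓ y < ∑ y ∈ S, w y * c := by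
        apply Finset.sum_lt_sum
        · intro i hi
          exact mul_le_mul_of_nonneg_left (hsupp i hi) (hw0 i hi)
        · exact ⟨s, hs, by nlinarith⟩
      rw [hsum, ← Finset.sum_mul, hw1, one_mul] at hlt'
      exact lt_irrefl _ hlt'
    rw [Finset.convexHull_eq]
    refine ⟨w, fun y hy => hw0 y (Finset.mem_of_subset (by classical exact Finset.filter_subset _ _) hy), ?_, ?_⟩
    · rw [← hw1]
      apply Finset.sum_subset
      · classical exact Finset.filter_subset _ _
      · intro s hs hns; exact hkey s hs hns
    · rw [← hwc]
      apply Finset.centerMass_subset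
      · classical exact Finset.filter_subset _ _
      · intro s hs hns; exact hkey s hs hns
  · intro p hp
    have hsub : (tightSet S ℓ c : Set (Fin n → ℝ)) ⊆ {q | q ∈ convexHull ℝ (S : Set (Fin n → ℝ)) ∧ ℓ q = c} := by
      intro s hs
      rw [Finset.mem_coe, mem_tightSet] at hs
      exact ⟨subset_convexHull ℝ _ (Finset.mem_coe.2 hs.1), hs.2⟩
    have hconv : Convex ℝ {q | q ∈ convexHull ℝ (S : Set (Fin n → ℝ)) ∧ ℓ q = c} := by
      have h1 : Convex ℝ (convexHull ℝ (S : Set (Fin n → ℝ))) := convex_convexHull ℝ _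
      have h2 : Convex ℝ {q : Fin n → ℝ | ℓ q = c} := convex_hyperplane ℓ.isLinear c
      exact h1.inter h2
    exact convexHull_min hsub hconv hp

/-- Separating a vector from a submodule by a dual functional. -/
lemma exists_functional_of_not_mem {n : ℕ} {U : Submodule ℝ (Fin n → ℝ)} {q : Fin n → ℝ}
    (hq : q ∉ U) : ∃ φ : (Fin n → ℝ) →ₗ[ℝ] ℝ, (∀ u ∈ U, φ u = 0) ∧ φ q ≠ 0 := by
  have h0 : U.mkQ q ≠ 0 := by
    simpa [Submodule.Quotient.mk_eq_zero] using hq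
  have := (Module.forall_dual_apply_eq_zero_iff ℝ (U.mkQ q)).not.2 h0
  push_neg at this
  obtain ⟨ψ, hψ⟩ := this
  refine ⟨ψ.comp U.mkQ, fun u hu => ?_, hψ⟩
  have : (Submodule.Quotient.mk u : (Fin n → ℝ) ⧸ U) = 0 := (Submodule.Quotient.mk_eq_zero U).2 hu
  simp [this]

lemma vectorSpan_le_of_sub_mem {n : ℕ} {A : Set (Fin n → ℝ)} {z : Fin n → ℝ}
    {U : Submodule ℝ (Fin n → ℝ)} (h : ∀ a ∈ A, a - z ∈ U) :
    vectorSpan ℝ A ≤ U := by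
  rw [vectorSpan_def, Submodule.span_le]
  rintro x hx
  obtain ⟨a, ha, b, hb, rfl⟩ := hx
  show a -ᵥ b ∈ U
  have heq : a -ᵥ b = (a - z) - (b - z) := by rw [vsub_eq_sub]; abel
  rw [heq]
  exact U.sub_mem (h a ha) (h b hb)

/-- Inserting one point raises the finrank of the vector span by at most one. -/
lemma finrank_vectorSpan_insert_le' {n : ℕ} (A : Set (Fin n → ℝ)) (z : Fin n → ℝ) :
    Module.finrank ℝ (vectorSpan ℝ (insert z A)) ≤ Module.finrank ℝ (vectorSpan ℝ A) + 1 := by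
  rcases A.eq_empty_or_nonempty with rfl | ⟨a₀, ha₀⟩
  · have : (insert z (∅ : Set (Fin n → ℝ))) = {z} := by simp
    rw [this, vectorSpan_singleton]; simp
  · have hle : vectorSpan ℝ (insert z A) ≤ vectorSpan ℝ A ⊔ Submodule.span ℝ {z - a₀} := by
      apply vectorSpan_le_of_sub_mem (z := a₀)
      rintro a (rfl | ha)
      · exact Submodule.mem_sup_right (Submodule.mem_span_singleton_self _)
      · exact Submodule.mem_sup_left (vsub_mem_vectorSpan ℝ ha ha₀)
    calc Module.finrank ℝ (vectorSpan ℝ (insert z A))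
        ≤ Module.finrank ℝ (vectorSpan ℝ A ⊔ Submodule.span ℝ {z - a₀} : Submodule ℝ (Fin n → ℝ)) :=
          Submodule.finrank_mono hle
      _ ≤ Module.finrank ℝ (vectorSpan ℝ A) + Module.finrank ℝ (Submodule.span ℝ ({z - a₀} : Set (Fin n → ℝ))) := by
          have := Submodule.finrank_sup_add_finrank_inf_eq (vectorSpan ℝ A) (Submodule.span ℝ ({z - a₀} : Set (Fin n → ℝ)))
          omega
      _ ≤ Module.finrank ℝ (vectorSpan ℝ A) + 1 := by
          have h1 : Module.finrank ℝ (Submodule.span ℝ ({z - a₀} : Set (Fin n → ℝ))) ≤ 1 := by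
            rcases eq_or_ne (z - a₀) 0 with h | h
            · rw [h, Submodule.span_zero_singleton]; simp
            · rw [finrank_span_singleton h]
          omega

lemma finrank_inf_ker_ge {n : ℕ} (W : Submodule ℝ (Fin n → ℝ)) (φ : (Fin n → ℝ) →ₗ[ℝ] ℝ) :
    Module.finrank ℝ W ≤ Module.finrank ℝ (W ⊓ LinearMap.ker φ : Submodule ℝ (Fin n → ℝ)) + 1 := by
  set ψ := φ.comp W.subtype with hψ
  have hker : (LinearMap.ker ψ).map W.subtype = W ⊓ LinearMap.ker φ := by
    ext x
    simp only [Submodule.mem_map, LinearMap.mem_ker, Submodule.mem_inf, hψ, LinearMap.comp_apply,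
      Submodule.coe_subtype]
    constructor
    · rintro ⟨⟨y, hy⟩, h1, rfl⟩; exact ⟨hy, h1⟩
    · rintro ⟨h1, h2⟩; exact ⟨⟨x, h1⟩, h2, rfl⟩
  have h1 : Module.finrank ℝ (LinearMap.ker ψ) = Module.finrank ℝ (W ⊓ LinearMap.ker φ : Submodule ℝ (Fin n → ℝ)) := by
    rw [← hker]
    exact (Submodule.equivMapOfInjective _ W.injective_subtype _).symm.finrank_eq.symm
  have h2 := LinearMap.finrank_range_add_finrank_ker ψ
  have h3 : Module.finrank ℝ (LinearMap.range ψ) ≤ 1 := by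
    have : Module.finrank ℝ (LinearMap.range ψ) ≤ Module.finrank ℝ ℝ := Submodule.finrank_le _
    simpa using this
  omega

/-- The rotation (face-enlargement) step. -/
lemma enlarge_step {n : ℕ} {S : Finset (Fin n → ℝ)} (z : Fin n → ℝ)
    {ℓ : (Fin n → ℝ) →ₗ[ℝ] ℝ} {c : ℝ}
    (hsupp : ∀ s ∈ S, ℓ s ≤ c)
    (hfr : Module.finrank ℝ (vectorSpan ℝ ((tightSet S ℓ c : Finset (Fin n → ℝ)) : Set (Fin n → ℝ))) + 2 ≤
      Module.finrank ℝ (vectorSpan ℝ (S : Set (Fin n → ℝ)))) :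
    ∃ (ℓ' : (Fin n → ℝ) →ₗ[ℝ] ℝ) (c' : ℝ), (∀ s ∈ S, ℓ' s ≤ c') ∧
      tightSet S ℓ c ⊂ tightSet S ℓ' c' ∧ ℓ' z - c' = ℓ z - c := by
  classical
  set T := tightSet S ℓ c with hT
  set U := vectorSpan ℝ (insert z (T : Set (Fin n → ℝ))) with hU
  -- find a point outside the affine span of T ∪ {z}
  have hs₀ : ∃ s₀ ∈ S, s₀ - z ∉ U := by
    by_contra h
    push_neg at h
    have hle : vectorSpan ℝ (S : Set (Fin n → ℝ)) ≤ U := vectorSpan_le_of_sub_mem h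
    have h1 : Module.finrank ℝ (vectorSpan ℝ (S : Set (Fin n → ℝ))) ≤ Module.finrank ℝ U :=
      Submodule.finrank_mono hle
    have h2 := finrank_vectorSpan_insert_le' ((T : Finset (Fin n → ℝ)) : Set (Fin n → ℝ)) z
    rw [← hU] at h2
    omega
  obtain ⟨s₀, hs₀S, hs₀U⟩ := hs₀
  obtain ⟨φ, hφU, hφq⟩ := exists_functional_of_not_mem hs₀U
  -- φ is constant on T ∪ {z}
  have hφT : ∀ s ∈ T, φ s = φ z := by
    intro s hs
    have : s - z ∈ U := by
      have := vsub_mem_vectorSpan ℝ (p₁ := s) (p₂ := z)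
        (Set.mem_insert_of_mem _ (Finset.mem_coe.2 hs)) (Set.mem_insert _ _)
      simpa [vsub_eq_sub] using this
    have h0 := hφU _ this
    rw [map_sub] at h0
    linarith
  have hφs₀ : φ s₀ ≠ φ z := by
    intro h
    apply hφq
    rw [map_sub, h, sub_self]
  -- choose the sign so that h s₀ > h z
  set h : (Fin n → ℝ) →ₗ[ℝ] ℝ := if φ s₀ > φ z then φ else -φ with hh
  have hhT : ∀ s ∈ T, h s = h z := by
    intro s hs
    by_cases hc : φ s₀ > φ z <;> simp [hh, hc, hφT s hs]
  have hhs₀ : h s₀ > h z := by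
    by_cases hc : φ s₀ > φ z
    · simpa [hh, hc] using hc
    · have : φ s₀ < φ z := lt_of_le_of_ne (not_lt.1 hc) hφs₀
      simp only [hh, if_neg hc, LinearMap.neg_apply]
      linarith
  -- the set of points that can become tight
  set Tp := S.filter (fun s => h s > h z) with hTp
  have hTpne : Tp.Nonempty := ⟨s₀, by simp [hTp, hs₀S, hhs₀]⟩
  have hTpnotT : ∀ s ∈ Tp, ℓ s < c := by
    intro s hs
    rw [hTp, Finset.mem_filter] at hs
    refine lt_of_le_of_ne (hsupp s hs.1) (fun he => ?_)
    have : s ∈ T := mem_tightSet.2 ⟨hs.1, he⟩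
    have := hhT s this
    exact absurd this (ne_of_gt hs.2)
  set r : (Fin n → ℝ) → ℝ := fun s => (c - ℓ s) / (h s - h z) with hr
  set t := Tp.inf' hTpne r with ht
  have htpos : 0 < t := by
    rw [ht, Finset.lt_inf'_iff]
    intro s hs
    have h1 : 0 < c - ℓ s := by have := hTpnotT s hs; linarith
    have h2 : 0 < h s - h z := by
      rw [hTp, Finset.mem_filter] at hs; linarith [hs.2]
    exact div_pos h1 h2
  refine ⟨ℓ + t • h, c + t * h z, ?_, ?_, ?_⟩
  · intro s hsS
    simp only [LinearMap.add_apply, LinearMap.smul_apply, smul_eq_mul]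
    by_cases hsT : s ∈ T
    · have h1 : ℓ s = c := (mem_tightSet.1 hsT).2
      have h2 := hhT s hsT
      rw [h1, h2]
    · have h1 : ℓ s < c := lt_of_le_of_ne (hsupp s hsS) (fun hc => hsT (mem_tightSet.2 ⟨hsS, hc⟩))
      by_cases hsp : h s > h z
      · have hsTp : s ∈ Tp := by rw [hTp, Finset.mem_filter]; exact ⟨hsS, hsp⟩
        have h2 : t ≤ r s := Finset.inf'_le r hsTp
        have h3 : t * (h s - h z) ≤ c - ℓ s := by
          rw [hr] at h2
          have h4 : 0 < h s - h z := by linarith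
          calc t * (h s - h z) ≤ ((c - ℓ s) / (h s - h z)) * (h s - h z) :=
                mul_le_mul_of_nonneg_right h2 (le_of_lt h4)
            _ = c - ℓ s := div_mul_cancel₀ _ (ne_of_gt h4)
        nlinarith
      · have h2 : h s ≤ h z := not_lt.1 hsp
        nlinarith
  · rw [Finset.ssubset_iff_of_subset]
    · obtain ⟨s₁, hs₁, hs₁t⟩ := Finset.exists_mem_eq_inf' hTpne r
      have hs₁' := hs₁
      rw [hTp, Finset.mem_filter] at hs₁'
      obtain ⟨hs₁S, hs₁gt⟩ := hs₁'
      refine ⟨s₁, mem_tightSet.2 ⟨hs₁S, ?_⟩, fun hmem => ?_⟩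
      · simp only [LinearMap.add_apply, LinearMap.smul_apply, smul_eq_mul]
        have h4 : h s₁ - h z ≠ 0 := ne_of_gt (by linarith)
        have h5 : t = (c - ℓ s₁) / (h s₁ - h z) := hs₁t
        rw [h5]
        field_simp
        ring
      · have := hhT s₁ hmem
        exact absurd this (ne_of_gt hs₁gt)
    · intro s hsT
      have h1 : ℓ s = c := (mem_tightSet.1 hsT).2
      have h2 := hhT s hsT
      refine mem_tightSet.2 ⟨(mem_tightSet.1 hsT).1, ?_⟩
      simp only [LinearMap.add_apply, LinearMap.smul_apply, smul_eq_mul]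
      rw [h1, h2]
  · simp only [LinearMap.add_apply, LinearMap.smul_apply, smul_eq_mul]
    ring

lemma tightSet_subset {n : ℕ} (S : Finset (Fin n → ℝ)) (ℓ : (Fin n → ℝ) →ₗ[ℝ] ℝ) (c : ℝ) :
    tightSet S ℓ c ⊆ S := fun s hs => (mem_tightSet.1 hs).1

/-- vectorSpan of a convex hull. -/
lemma vectorSpan_convexHull' {n : ℕ} (A : Set (Fin n → ℝ)) :
    vectorSpan ℝ (convexHull ℝ A) = vectorSpan ℝ A := by
  rw [← direction_affineSpan, affineSpan_convexHull, direction_affineSpan]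

/-- The rotation engine: enlarge a supporting functional's tight set until it spans
a hyperplane, preserving the value defect at `z`. -/
lemma engine {n : ℕ} {S : Finset (Fin n → ℝ)} (z : Fin n → ℝ) :
    ∀ (k : ℕ) (ℓ : (Fin n → ℝ) →ₗ[ℝ] ℝ) (c : ℝ), (∀ s ∈ S, ℓ s ≤ c) →
      S.card ≤ (tightSet S ℓ c).card + k →
      ∃ (ℓ' : (Fin n → ℝ) →ₗ[ℝ] ℝ) (c' : ℝ), (∀ s ∈ S, ℓ' s ≤ c') ∧
        tightSet S ℓ c ⊆ tightSet S ℓ' c' ∧ ℓ' z - c' = ℓ z - c ∧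
        Module.finrank ℝ (vectorSpan ℝ (S : Set (Fin n → ℝ))) ≤
          Module.finrank ℝ (vectorSpan ℝ ((tightSet S ℓ' c' : Finset (Fin n → ℝ)) : Set (Fin n → ℝ))) + 1 := by
  intro k
  induction k with
  | zero =>
    intro ℓ c hsupp hcard
    refine ⟨ℓ, c, hsupp, subset_rfl, rfl, ?_⟩
    have hTS : tightSet S ℓ c = S :=
      Finset.eq_of_subset_of_card_le (tightSet_subset S ℓ c) (by omega)
    rw [hTS]
    omega
  | succ k ih =>
    intro ℓ c hsupp hcard
    by_cases hstop : Module.finrank ℝ (vectorSpan ℝ (S : Set (Fin n → ℝ))) ≤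
        Module.finrank ℝ (vectorSpan ℝ ((tightSet S ℓ c : Finset (Fin n → ℝ)) : Set (Fin n → ℝ))) + 1
    · exact ⟨ℓ, c, hsupp, subset_rfl, rfl, hstop⟩
    · obtain ⟨ℓ₁, c₁, hsupp₁, hss, hinv⟩ := enlarge_step z hsupp (by omega)
      have hcard₁ : S.card ≤ (tightSet S ℓ₁ c₁).card + k := by
        have := Finset.card_lt_card hss
        omega
      obtain ⟨ℓ', c', h1, h2, h3, h4⟩ := ih ℓ₁ c₁ hsupp₁ hcard₁
      exact ⟨ℓ', c', h1, (subset_of_ssubset hss).trans h2, by linarith, h4⟩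

lemma le_on_hull {n : ℕ} {S : Finset (Fin n → ℝ)} {ℓ : (Fin n → ℝ) →ₗ[ℝ] ℝ} {c : ℝ}
    (hsupp : ∀ s ∈ S, ℓ s ≤ c) : ∀ p ∈ convexHull ℝ (S : Set (Fin n → ℝ)), ℓ p ≤ c := by
  intro p hp
  have : convexHull ℝ (S : Set (Fin n → ℝ)) ⊆ {w | ℓ w ≤ c} :=
    convexHull_min (fun s hs => hsupp s (Finset.mem_coe.1 hs)) (convex_halfSpace_le ℓ.isLinear c)
  exact this hp

/-- Build a facet from a supporting functional whose tight set spans a hyperplane. -/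
lemma isFacet_of_tight {n : ℕ} {S : Finset (Fin n → ℝ)} {P : Set (Fin n → ℝ)}
    (hP : P = convexHull ℝ (S : Set (Fin n → ℝ)))
    {ℓ : (Fin n → ℝ) →ₗ[ℝ] ℝ} {c : ℝ} (hsupp : ∀ s ∈ S, ℓ s ≤ c)
    (hne : (tightSet S ℓ c).Nonempty)
    (hfr : sdim P ≤ Module.finrank ℝ
      (vectorSpan ℝ ((tightSet S ℓ c : Finset (Fin n → ℝ)) : Set (Fin n → ℝ))) + 1)
    {z : Fin n → ℝ} (hz : z ∈ affineSpan ℝ P) (hznc : ℓ z ≠ c) :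
    IsFacet P {p ∈ P | ℓ p = c} ∧ {p ∈ P | ℓ p = c} =
      convexHull ℝ ((tightSet S ℓ c : Finset (Fin n → ℝ)) : Set (Fin n → ℝ)) := by
  have hface : {p ∈ P | ℓ p = c} = convexHull ℝ ((tightSet S ℓ c : Finset (Fin n → ℝ)) : Set (Fin n → ℝ)) := by
    rw [hP]; exact face_eq_convexHull_tightSet S ℓ c hsupp
  have hVS : vectorSpan ℝ P = vectorSpan ℝ (S : Set (Fin n → ℝ)) := by
    rw [hP, vectorSpan_convexHull']
  -- the tight face has dimension exactly sdim P - 1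
  have hsdimF : sdim {p ∈ P | ℓ p = c} =
      Module.finrank ℝ (vectorSpan ℝ ((tightSet S ℓ c : Finset (Fin n → ℝ)) : Set (Fin n → ℝ))) := by
    rw [hface, sdim, vectorSpan_convexHull']
  obtain ⟨p₀, hp₀⟩ := hne
  have hp₀S : p₀ ∈ S := (mem_tightSet.1 hp₀).1
  have hp₀c : ℓ p₀ = c := (mem_tightSet.1 hp₀).2
  have hp₀P : p₀ ∈ P := by rw [hP]; exact subset_convexHull ℝ _ (Finset.mem_coe.2 hp₀S)
  -- ℓ is not constant on the affine span
  have hVnotker : ¬ (vectorSpan ℝ P ≤ LinearMap.ker ℓ) := by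
    intro hle
    apply hznc
    have hp₀aff : p₀ ∈ affineSpan ℝ P := subset_affineSpan ℝ P hp₀P
    have hdiff : z - p₀ ∈ vectorSpan ℝ P := by
      have := AffineSubspace.vsub_mem_direction hz hp₀aff
      rwa [direction_affineSpan, vsub_eq_sub] at this
    have : ℓ (z - p₀) = 0 := hle hdiff
    rw [map_sub] at this
    linarith [hp₀c]
  have hlt : (vectorSpan ℝ P ⊓ LinearMap.ker ℓ : Submodule ℝ (Fin n → ℝ)) < vectorSpan ℝ P := by
    rcases lt_or_eq_of_le (inf_le_left : vectorSpan ℝ P ⊓ LinearMap.ker ℓ ≤ vectorSpan ℝ P) with h | h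
    · exact h
    · exfalso
      apply hVnotker
      intro v hv
      have : v ∈ vectorSpan ℝ P ⊓ LinearMap.ker ℓ := h.symm ▸ hv
      exact (Submodule.mem_inf.1 this).2
  have hFle : vectorSpan ℝ {p ∈ P | ℓ p = c} ≤ vectorSpan ℝ P ⊓ LinearMap.ker ℓ := by
    apply le_inf
    · exact vectorSpan_mono ℝ (fun p hp => hp.1)
    · apply vectorSpan_le_of_sub_mem (z := p₀)
      rintro a ⟨haP, hac⟩
      simp only [LinearMap.mem_ker, map_sub]
      rw [hac, hp₀c, sub_self]
  have hdim_lt : sdim {p ∈ P | ℓ p = c} < sdim P := by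
    have h1 : Module.finrank ℝ (vectorSpan ℝ {p ∈ P | ℓ p = c}) ≤
        Module.finrank ℝ (vectorSpan ℝ P ⊓ LinearMap.ker ℓ : Submodule ℝ (Fin n → ℝ)) :=
      Submodule.finrank_mono hFle
    have h2 := Submodule.finrank_lt_finrank_of_lt hlt
    simp only [sdim]
    omega
  have hsd : sdim {p ∈ P | ℓ p = c} + 1 = sdim P := by
    rw [hsdimF] at hdim_lt ⊢
    omega
  have hsuppP : ∀ p ∈ P, ℓ p ≤ c := by rw [hP]; exact le_on_hull hsupp
  refine ⟨⟨Or.inr (Or.inr ⟨ℓ, c, hsuppP, rfl⟩), ?_, hsd⟩, hface⟩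
  · rw [hface]
    exact (convexHull_nonempty_iff.2 (by exact ⟨p₀, Finset.mem_coe.2 hp₀⟩))

/-- Any two supporting functionals of a facet agree in sign everywhere on the affine hull. -/
lemma facet_functional_sign {n : ℕ} {P F : Set (Fin n → ℝ)}
    (hFP : F ⊆ P) (hFne : F.Nonempty) (hsd : sdim F + 1 = sdim P)
    {f f' : (Fin n → ℝ) →ₗ[ℝ] ℝ} {c c' : ℝ}
    (hf : ∀ p ∈ P, f p ≤ c) (hf' : ∀ p ∈ P, f' p ≤ c')
    (hFf : F = {p ∈ P | f p = c}) (hFf' : F = {p ∈ P | f' p = c'})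
    {y : Fin n → ℝ} (hy : y ∈ affineSpan ℝ P) (hviol : c < f y) : c' < f' y := by
  obtain ⟨p₀, hp₀⟩ := hFne
  have hp₀P : p₀ ∈ P := hFP hp₀
  have hp₀c : f p₀ = c := by rw [hFf] at hp₀; exact hp₀.2
  have hp₀c' : f' p₀ = c' := by rw [hFf'] at hp₀; exact hp₀.2
  set W := vectorSpan ℝ F with hW
  set V := vectorSpan ℝ P with hV
  have hWV : W ≤ V := vectorSpan_mono ℝ hFP
  have hdW : Module.finrank ℝ W + 1 = Module.finrank ℝ V := hsd
  -- f and f' vanish on W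
  have hfW : W ≤ LinearMap.ker f := by
    apply vectorSpan_le_of_sub_mem (z := p₀)
    intro a ha
    have hac : f a = c := by rw [hFf] at ha; exact ha.2
    simp only [LinearMap.mem_ker, map_sub]
    rw [hac, hp₀c, sub_self]
  have hfW' : W ≤ LinearMap.ker f' := by
    apply vectorSpan_le_of_sub_mem (z := p₀)
    intro a ha
    have hac : f' a = c' := by rw [hFf'] at ha; exact ha.2
    simp only [LinearMap.mem_ker, map_sub]
    rw [hac, hp₀c', sub_self]
  -- F ≠ P
  have hFneP : ¬ (P ⊆ F) := by
    intro hPF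
    have : F = P := Set.Subset.antisymm hFP hPF
    rw [this] at hsd
    omega
  obtain ⟨p₁, hp₁P, hp₁F⟩ : ∃ p₁ ∈ P, p₁ ∉ F := by
    by_contra hcon
    push_neg at hcon
    exact hFneP hcon
  have hp₁lt : f p₁ < c := lt_of_le_of_ne (hf p₁ hp₁P) (fun he => hp₁F (by rw [hFf]; exact ⟨hp₁P, he⟩))
  have hp₁lt' : f' p₁ < c' := lt_of_le_of_ne (hf' p₁ hp₁P) (fun he => hp₁F (by rw [hFf']; exact ⟨hp₁P, he⟩))
  -- pick e ∈ V \ W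
  have hWltV : W < V := lt_of_le_of_ne hWV (fun he => by rw [he] at hdW; omega)
  obtain ⟨e, heV, heW⟩ := SetLike.exists_of_lt hWltV
  -- V = W ⊔ span e
  have hsup : W ⊔ Submodule.span ℝ {e} = V := by
    apply Submodule.eq_of_le_of_finrank_le
    · exact sup_le hWV ((Submodule.span_singleton_le_iff_mem e V).2 heV)
    · have h1 : W < W ⊔ Submodule.span ℝ {e} := by
        refine lt_of_le_of_ne le_sup_left (fun he' => heW ?_)
        rw [he']
        exact Submodule.mem_sup_right (Submodule.mem_span_singleton_self e)
      have h2 := Submodule.finrank_lt_finrank_of_lt h1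
      omega
  -- decomposition of points of the affine span
  have hdecomp : ∀ q : Fin n → ℝ, q ∈ affineSpan ℝ P → ∃ s : ℝ,
      f q - c = s * f e ∧ f' q - c' = s * f' e := by
    intro q hq
    have hqV : q - p₀ ∈ V := by
      have := AffineSubspace.vsub_mem_direction hq (subset_affineSpan ℝ P hp₀P)
      rwa [direction_affineSpan, vsub_eq_sub] at this
    rw [← hsup] at hqV
    obtain ⟨ω, hω, se, hse, hsum⟩ := Submodule.mem_sup.1 hqV
    obtain ⟨s, rfl⟩ := Submodule.mem_span_singleton.1 hse
    refine ⟨s, ?_, ?_⟩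
    · have h1 : f (q - p₀) = s * f e := by
        rw [← hsum, map_add, hfW hω, map_smul]
        simp [smul_eq_mul]
      rw [map_sub, hp₀c] at h1
      linarith
    · have h1 : f' (q - p₀) = s * f' e := by
        rw [← hsum, map_add, hfW' hω, map_smul]
        simp [smul_eq_mul]
      rw [map_sub, hp₀c'] at h1
      linarith
  -- same-sign property
  obtain ⟨s₁, hs₁, hs₁'⟩ := hdecomp p₁ (subset_affineSpan ℝ P hp₁P)
  obtain ⟨sy, hsy, hsy'⟩ := hdecomp y hy
  nlinarith [mul_pos (sub_pos.2 hp₁lt) (sub_pos.2 hp₁lt'), sq_nonneg s₁, sq_nonneg (s₁ * sy)]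

section Vertex

variable {n : ℕ} {S : Finset (Fin n → ℝ)} {P : Set (Fin n → ℝ)}

/-- A face is a convex set. -/
lemma face_convex (hP : P = convexHull ℝ (S : Set (Fin n → ℝ))) {F : Set (Fin n → ℝ)}
    (hF : IsFace P F) : Convex ℝ F := by
  rcases hF with rfl | rfl | ⟨f, c, hf, rfl⟩
  · exact convex_empty
  · rw [hP]; exact convex_convexHull ℝ _
  · have h1 : Convex ℝ P := by rw [hP]; exact convex_convexHull ℝ _
    exact h1.inter (convex_hyperplane f.isLinear c)

/-- A vertex of a polytope of positive dimension admits an exposing functional,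
belongs to `P` and to the generating set. -/
lemma vertex_exposed (hP : P = convexHull ℝ (S : Set (Fin n → ℝ)))
    {v : Fin n → ℝ} (hv : IsVertex P v) (hdim : 1 ≤ sdim P) :
    v ∈ P ∧ v ∈ S ∧ ∃ (g : (Fin n → ℝ) →ₗ[ℝ] ℝ) (cv : ℝ),
      (∀ p ∈ P, g p ≤ cv) ∧ ({v} : Set (Fin n → ℝ)) = {p ∈ P | g p = cv} := by
  rcases hv with h | h | ⟨g, cv, hg, hgv⟩
  · exact absurd h (Set.singleton_ne_empty v)
  · exfalso
    have : sdim P = 0 := by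
      rw [← h, sdim, vectorSpan_singleton]
      simp
    omega
  · have hvP : v ∈ P := by
      have : v ∈ ({v} : Set (Fin n → ℝ)) := rfl
      rw [hgv] at this
      exact this.1
    refine ⟨hvP, ?_, g, cv, hg, hgv⟩
    -- v belongs to the generating set
    have hsupp : ∀ s ∈ S, g s ≤ cv := fun s hs =>
      hg s (by rw [hP]; exact subset_convexHull ℝ _ (Finset.mem_coe.2 hs))
    have hface : ({v} : Set (Fin n → ℝ)) =
        convexHull ℝ ((tightSet S g cv : Finset (Fin n → ℝ)) : Set (Fin n → ℝ)) := by
      rw [hgv, hP]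
      exact face_eq_convexHull_tightSet S g cv hsupp
    have hne : (tightSet S g cv).Nonempty := by
      by_contra hcon
      rw [Finset.not_nonempty_iff_eq_empty] at hcon
      rw [hcon] at hface
      simp at hface
    obtain ⟨s, hs⟩ := hne
    have hsv : s = v := by
      have h1 : s ∈ convexHull ℝ ((tightSet S g cv : Finset (Fin n → ℝ)) : Set (Fin n → ℝ)) :=
        subset_convexHull ℝ _ (Finset.mem_coe.2 hs)
      rw [← hface] at h1
      exact h1
    rw [← hsv]
    exact (mem_tightSet.1 hs).1

/-- An edge joining two vertices is exactly the segment between them. -/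
lemma edge_eq_segment (hP : P = convexHull ℝ (S : Set (Fin n → ℝ)))
    {v x : Fin n → ℝ} (hv : IsVertex P v) (hx : IsVertex P x) (hvx : v ≠ x)
    (hdim : 2 ≤ sdim P) {E : Set (Fin n → ℝ)} (hE : IsEdge P E)
    (hvE : v ∈ E) (hxE : x ∈ E) : E = segment ℝ v x := by
  obtain ⟨hvP, -, g, cv, hgle, hgv⟩ := vertex_exposed hP hv (by omega)
  obtain ⟨hxP, -, g', cx, hgle', hgx⟩ := vertex_exposed hP hx (by omega)
  have hgvv : g v = cv := by
    have : v ∈ ({v} : Set (Fin n → ℝ)) := rfl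
    rw [hgv] at this; exact this.2
  have hgxx : g' x = cx := by
    have : x ∈ ({x} : Set (Fin n → ℝ)) := rfl
    rw [hgx] at this; exact this.2
  have hgx_lt : g x < cv := by
    refine lt_of_le_of_ne (hgle x hxP) (fun he => hvx ?_)
    have : x ∈ ({v} : Set (Fin n → ℝ)) := by rw [hgv]; exact ⟨hxP, he⟩
    exact (this : x = v).symm
  have hgv_lt : g' v < cx := by
    refine lt_of_le_of_ne (hgle' v hvP) (fun he => hvx ?_)
    have : v ∈ ({x} : Set (Fin n → ℝ)) := by rw [hgx]; exact ⟨hvP, he⟩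
    exact this
  obtain ⟨hEface, hEdim⟩ := hE
  have hEP : E ⊆ P := by
    rcases hEface with rfl | rfl | ⟨f, c, hf, rfl⟩
    · exact Set.empty_subset P
    · exact subset_rfl
    · exact fun p hp => hp.1
  set w : Fin n → ℝ := x - v with hw
  have hwne : w ≠ 0 := sub_ne_zero.2 (Ne.symm hvx)
  -- the vector span of E is spanned by w
  have hspan : vectorSpan ℝ E = Submodule.span ℝ {w} := by
    symm
    apply Submodule.eq_of_le_of_finrank_le
    · rw [Submodule.span_singleton_le_iff_mem]
      have := vsub_mem_vectorSpan ℝ hxE hvE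
      simpa [vsub_eq_sub] using this
    · have h1 : Module.finrank ℝ (vectorSpan ℝ E) = 1 := hEdim
      rw [h1, finrank_span_singleton hwne]
  -- every point of E has the form v + s • w
  have hform : ∀ y ∈ E, ∃ s : ℝ, y = v + s • w := by
    intro y hy
    have h1 : y - v ∈ vectorSpan ℝ E := by
      have := vsub_mem_vectorSpan ℝ hy hvE
      simpa [vsub_eq_sub] using this
    rw [hspan] at h1
    obtain ⟨s, hs⟩ := Submodule.mem_span_singleton.1 h1
    exact ⟨s, by rw [hs]; abel⟩
  apply Set.Subset.antisymm
  · intro y hy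
    obtain ⟨s, rfl⟩ := hform y hy
    have hyP : v + s • w ∈ P := hEP hy
    have hs0 : 0 ≤ s := by
      by_contra hs
      push_neg at hs
      -- v = a • y + b • x with a b > 0, a + b = 1
      have ha : (0:ℝ) < 1 / (1 - s) := by
        apply div_pos one_pos
        linarith
      have hb : (0:ℝ) < -s / (1 - s) := by
        apply div_pos <;> linarith
      have h1s : (1:ℝ) - s ≠ 0 := by linarith
      have hab : 1 / (1 - s) + -s / (1 - s) = 1 := by
        field_simp
        ring
      have hcomb : v = (1 / (1 - s)) • (v + s • w) + (-s / (1 - s)) • x := by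
        rw [hw]
        have h1s : (1:ℝ) - s ≠ 0 := by linarith
        funext i
        simp only [Pi.add_apply, Pi.smul_apply, Pi.sub_apply, smul_eq_mul]
        field_simp
        ring
      have := hgle _ hyP
      have hgval : g v = (1 / (1 - s)) * g (v + s • w) + (-s / (1 - s)) * g x := by
        rw [hcomb, map_add, map_smul, map_smul, smul_eq_mul, smul_eq_mul]
        rw [← hcomb]
      have k1 : (1 / (1 - s)) * g (v + s • w) ≤ (1 / (1 - s)) * cv :=
        mul_le_mul_of_nonneg_left this (le_of_lt ha)
      have k2 : (-s / (1 - s)) * g x < (-s / (1 - s)) * cv :=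
        (mul_lt_mul_iff_right₀ hb).2 hgx_lt
      have k3 : 1 / (1 - s) * cv + -s / (1 - s) * cv = cv := by
        field_simp
        ring
      linarith [hgval, hgvv, k1, k2, k3]
    have hs1 : s ≤ 1 := by
      by_contra hs
      push_neg at hs
      have ha : (0:ℝ) < 1 - 1 / s := by
        have : (0:ℝ) < 1 / s := by positivity
        have : 1 / s < 1 := by rw [div_lt_one (by linarith)]; linarith
        linarith
      have hb : (0:ℝ) < 1 / s := by positivity
      have hcomb : x = (1 - 1 / s) • v + (1 / s) • (v + s • w) := by
        rw [hw]
        have hsne : s ≠ 0 := by linarith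
        funext i
        simp only [Pi.add_apply, Pi.smul_apply, Pi.sub_apply, smul_eq_mul]
        field_simp
        ring
      have := hgle' _ hyP
      have hgval : g' x = (1 - 1 / s) * g' v + (1 / s) * g' (v + s • w) := by
        rw [hcomb, map_add, map_smul, map_smul, smul_eq_mul, smul_eq_mul]
      have hab : (1 - 1 / s) + 1 / s = 1 := by ring
      have k1 : (1 / s) * g' (v + s • w) ≤ (1 / s) * cx :=
        mul_le_mul_of_nonneg_left this (le_of_lt hb)
      have k2 : (1 - 1 / s) * g' v < (1 - 1 / s) * cx :=
        (mul_lt_mul_iff_right₀ ha).2 hgv_lt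
      have k3 : (1 - 1 / s) * cx + 1 / s * cx = cx := by ring
      linarith [hgval, hgxx, k1, k2, k3]
    rw [segment_eq_image']
    exact ⟨s, ⟨hs0, hs1⟩, rfl⟩
  · have hconv : Convex ℝ E := face_convex hP hEface
    exact hconv.segment_subset hvE hxE

/-- A facet is neither empty nor all of `P`, hence has a supporting functional. -/
lemma facet_exposed (hP : P = convexHull ℝ (S : Set (Fin n → ℝ))) {F : Set (Fin n → ℝ)}
    (hF : IsFacet P F) : ∃ (f : (Fin n → ℝ) →ₗ[ℝ] ℝ) (c : ℝ),
      (∀ p ∈ P, f p ≤ c) ∧ F = {p ∈ P | f p = c} := by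
  obtain ⟨hface, hne, hsd⟩ := hF
  rcases hface with rfl | rfl | h
  · exact absurd hne (by simp)
  · omega
  · exact h

/-- Faces are convex hulls of subsets of `S`; in particular there are finitely many facets. -/
lemma facets_finite (hP : P = convexHull ℝ (S : Set (Fin n → ℝ))) :
    {F : Set (Fin n → ℝ) | IsFacet P F}.Finite := by
  have hsub : {F : Set (Fin n → ℝ) | IsFacet P F} ⊆
      (fun T : Finset (Fin n → ℝ) => convexHull ℝ (T : Set (Fin n → ℝ))) '' {T | T ⊆ S} := by
    intro F hF
    obtain ⟨f, c, hsupp, hFeq⟩ := facet_exposed hP hF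
    have hsuppS : ∀ s ∈ S, f s ≤ c := fun s hs =>
      hsupp s (by rw [hP]; exact subset_convexHull ℝ _ (Finset.mem_coe.2 hs))
    refine ⟨tightSet S f c, fun s hs => (mem_tightSet.1 hs).1, ?_⟩
    rw [hFeq, hP]
    exact (face_eq_convexHull_tightSet S f c hsuppS).symm
  apply Set.Finite.subset _ hsub
  apply Set.Finite.image
  have : {T : Finset (Fin n → ℝ) | T ⊆ S} = ↑S.powerset := by
    ext T; simp [Finset.mem_powerset]
  rw [this]
  exact (S.powerset).finite_toSet

end Vertex

section Apps

variable {n : ℕ} {S : Finset (Fin n → ℝ)} {P : Set (Fin n → ℝ)}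

lemma sdimP_eq (hP : P = convexHull ℝ (S : Set (Fin n → ℝ))) :
    sdim P = Module.finrank ℝ (vectorSpan ℝ (S : Set (Fin n → ℝ))) := by
  rw [hP, sdim, vectorSpan_convexHull']

/-- Every proper exposed face extends to a facet avoiding a given point outside it. -/
lemma exists_facet_sep (hP : P = convexHull ℝ (S : Set (Fin n → ℝ)))
    {g : (Fin n → ℝ) →ₗ[ℝ] ℝ} {b : ℝ} (hgle : ∀ p ∈ P, g p ≤ b)
    (hGne : ({p ∈ P | g p = b}).Nonempty)
    {z : Fin n → ℝ} (hzP : z ∈ P) (hzG : z ∉ {p ∈ P | g p = b}) :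
    ∃ F : Set (Fin n → ℝ), IsFacet P F ∧ {p ∈ P | g p = b} ⊆ F ∧ z ∉ F := by
  have hsuppS : ∀ s ∈ S, g s ≤ b := fun s hs =>
    hgle s (by rw [hP]; exact subset_convexHull ℝ _ (Finset.mem_coe.2 hs))
  have hzlt : g z < b := by
    refine lt_of_le_of_ne (hgle z hzP) (fun he => hzG ⟨hzP, he⟩)
  obtain ⟨ℓ', c', hsupp', hsub', hinv', hfr'⟩ :=
    engine (S := S) z S.card g b hsuppS (by omega)
  have hT₀ : ({p ∈ P | g p = b}) = convexHull ℝ ((tightSet S g b : Finset (Fin n → ℝ)) : Set (Fin n → ℝ)) := by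
    rw [hP]; exact face_eq_convexHull_tightSet S g b hsuppS
  have hT₀ne : (tightSet S g b).Nonempty := by
    by_contra hc
    rw [Finset.not_nonempty_iff_eq_empty] at hc
    rw [hc] at hT₀
    obtain ⟨p, hp⟩ := hGne
    rw [hT₀] at hp
    simpa using hp
  have hTne : (tightSet S ℓ' c').Nonempty := hT₀ne.mono hsub'
  have hzaff : z ∈ affineSpan ℝ P := subset_affineSpan ℝ P hzP
  have hznc : ℓ' z ≠ c' := by
    intro he
    rw [he] at hinv'
    simp at hinv'
    linarith
  obtain ⟨hFacet, hFeq⟩ := isFacet_of_tight hP hsupp' hTne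
    (by rw [sdimP_eq hP]; exact hfr') hzaff hznc
  refine ⟨{p ∈ P | ℓ' p = c'}, hFacet, ?_, ?_⟩
  · rw [hT₀, hFeq]
    exact convexHull_mono (by exact_mod_cast hsub')
  · intro hzF
    exact hznc hzF.2
  
/-- If `y` lies in the affine hull but outside `P`, some facet inequality is violated at `y`. -/
lemma exists_violated_facet (hP : P = convexHull ℝ (S : Set (Fin n → ℝ))) (hSne : S.Nonempty)
    {y : Fin n → ℝ} (hy : y ∈ affineSpan ℝ P) (hyP : y ∉ P) :
    ∃ (F : Set (Fin n → ℝ)) (f : (Fin n → ℝ) →ₗ[ℝ] ℝ) (c : ℝ),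
      IsFacet P F ∧ (∀ p ∈ P, f p ≤ c) ∧ F = {p ∈ P | f p = c} ∧ c < f y := by
  have hconv : Convex ℝ P := by rw [hP]; exact convex_convexHull ℝ _
  have hclosed : IsClosed P := by rw [hP]; exact S.finite_toSet.isClosed_convexHull ℝ
  obtain ⟨f₀, u, hfP, hfy⟩ := geometric_hahn_banach_closed_point hconv hclosed hyP
  set ℓ₀ : (Fin n → ℝ) →ₗ[ℝ] ℝ := f₀.toLinearMap with hℓ₀
  set c₀ : ℝ := S.sup' hSne (fun s => ℓ₀ s) with hc₀
  have hsuppS : ∀ s ∈ S, ℓ₀ s ≤ c₀ := fun s hs => Finset.le_sup' _ hs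
  obtain ⟨s₀, hs₀S, hs₀max⟩ := Finset.exists_mem_eq_sup' hSne (fun s => ℓ₀ s)
  have hs₀P : s₀ ∈ P := by rw [hP]; exact subset_convexHull ℝ _ (Finset.mem_coe.2 hs₀S)
  have hc₀lt : c₀ < ℓ₀ y := by
    have h1 : ℓ₀ s₀ < u := hfP s₀ hs₀P
    have h2 : c₀ = ℓ₀ s₀ := hs₀max
    have h3 : u < ℓ₀ y := hfy
    linarith
  obtain ⟨ℓ', c', hsupp', hsub', hinv', hfr'⟩ :=
    engine (S := S) y S.card ℓ₀ c₀ hsuppS (by omega)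
  have hTne : (tightSet S ℓ' c').Nonempty := by
    refine Finset.Nonempty.mono hsub' ⟨s₀, mem_tightSet.2 ⟨hs₀S, hs₀max.symm⟩⟩
  have hviol : c' < ℓ' y := by linarith [hinv']
  obtain ⟨hFacet, -⟩ := isFacet_of_tight hP hsupp' hTne
    (by rw [sdimP_eq hP]; exact hfr') hy (ne_of_lt hviol).symm
  refine ⟨{p ∈ P | ℓ' p = c'}, ℓ', c', hFacet, ?_, rfl, hviol⟩
  intro p hp
  rw [hP] at hp
  have : convexHull ℝ (S : Set (Fin n → ℝ)) ⊆ {w | ℓ' w ≤ c'} :=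
    convexHull_min (fun s hs => hsupp' s (Finset.mem_coe.1 hs)) (convex_halfSpace_le ℓ'.isLinear c')
  exact this hp

end Apps

section K3

variable {n : ℕ} {S : Finset (Fin n → ℝ)} {P : Set (Fin n → ℝ)}

lemma face_subset {F : Set (Fin n → ℝ)} (hF : IsFace P F) : F ⊆ P := by
  rcases hF with rfl | rfl | ⟨f, c, hf, rfl⟩
  · exact Set.empty_subset P
  · exact subset_rfl
  · exact fun p hp => hp.1

lemma finrank_inf_biInf_ker {ι : Type} (W : Submodule ℝ (Fin n → ℝ)) (t : Finset ι)
    (φ : ι → ((Fin n → ℝ) →ₗ[ℝ] ℝ)) :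
    Module.finrank ℝ W ≤
      Module.finrank ℝ (W ⊓ ⨅ i ∈ t, LinearMap.ker (φ i) : Submodule ℝ (Fin n → ℝ)) + t.card := by
  classical
  induction t using Finset.induction_on with
  | empty =>
    have he : (⨅ i ∈ (∅ : Finset ι), LinearMap.ker (φ i) : Submodule ℝ (Fin n → ℝ)) = ⊤ := by simp
    rw [he, inf_top_eq]
    simp
  | @insert a t ha ih =>
    have h1 : (W ⊓ ⨅ i ∈ insert a t, LinearMap.ker (φ i) : Submodule ℝ (Fin n → ℝ)) =
        ((W ⊓ ⨅ i ∈ t, LinearMap.ker (φ i)) ⊓ LinearMap.ker (φ a) : Submodule ℝ (Fin n → ℝ)) := by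
      rw [Finset.iInf_insert]
      rw [inf_comm (LinearMap.ker (φ a)), inf_assoc]
    rw [h1, Finset.card_insert_of_notMem ha]
    have h2 := finrank_inf_ker_ge (W ⊓ ⨅ i ∈ t, LinearMap.ker (φ i)) (φ a)
    omega

/-- the midpoint membership characterisation for exposed faces -/
lemma midpoint_mem_face {f : (Fin n → ℝ) →ₗ[ℝ] ℝ} {c : ℝ} (hsupp : ∀ p ∈ P, f p ≤ c)
    {v x : Fin n → ℝ} (hvP : v ∈ P) (hxP : x ∈ P) (hmP : midpoint ℝ v x ∈ P) :
    midpoint ℝ v x ∈ {p ∈ P | f p = c} ↔ v ∈ {p ∈ P | f p = c} ∧ x ∈ {p ∈ P | f p = c} := by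
  have hfm : f (midpoint ℝ v x) = (f v + f x) / 2 := by
    rw [midpoint_eq_smul_add, map_smul]
    rw [map_add]
    simp [smul_eq_mul]
    ring
  constructor
  · rintro ⟨-, hm⟩
    have h1 := hsupp v hvP
    have h2 := hsupp x hxP
    rw [hfm] at hm
    exact ⟨⟨hvP, by linarith⟩, ⟨hxP, by linarith⟩⟩
  · rintro ⟨⟨-, h1⟩, ⟨-, h2⟩⟩
    exact ⟨hmP, by rw [hfm, h1, h2]; ring⟩

/-- An edge joining two vertices is contained in at least `d - 1` facets. -/
lemma edge_facet_lower (hP : P = convexHull ℝ (S : Set (Fin n → ℝ)))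
    (hd : 2 ≤ sdim P) {v x : Fin n → ℝ} (hv : IsVertex P v) (hx : IsVertex P x)
    (hvx : v ≠ x) {E : Set (Fin n → ℝ)} (hE : IsEdge P E) (hvE : v ∈ E) (hxE : x ∈ E) :
    sdim P ≤ {F : Set (Fin n → ℝ) | IsFacet P F ∧ v ∈ F ∧ x ∈ F}.ncard + 1 := by
  classical
  obtain ⟨hvP, hvS, -⟩ := vertex_exposed hP hv (by omega)
  obtain ⟨hxP, -, -⟩ := vertex_exposed hP hx (by omega)
  have hSne : S.Nonempty := ⟨v, hvS⟩
  set A := {F : Set (Fin n → ℝ) | IsFacet P F ∧ v ∈ F ∧ x ∈ F} with hA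
  by_contra hcon
  push_neg at hcon
  have hAcard : A.ncard + 2 ≤ sdim P := by omega
  have hAfin : A.Finite := (facets_finite hP).subset (fun F hF => hF.1)
  set tA := hAfin.toFinset with htA
  have htAcard : tA.card = A.ncard := by
    rw [htA, Set.ncard_eq_toFinset_card A hAfin]
  -- choose supporting functionals for the facets in A
  have hchoice : ∀ F : Set (Fin n → ℝ), ∃ fc : ((Fin n → ℝ) →ₗ[ℝ] ℝ) × ℝ,
      F ∈ A → (∀ p ∈ P, fc.1 p ≤ fc.2) ∧ F = {p ∈ P | fc.1 p = fc.2} := by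
    intro F
    by_cases hF : F ∈ A
    · obtain ⟨f, c, h1, h2⟩ := facet_exposed hP hF.1
      exact ⟨(f, c), fun _ => ⟨h1, h2⟩⟩
    · exact ⟨(0, 0), fun h => absurd h hF⟩
  choose κ hκ using hchoice
  -- the edge and its supporting functional
  have hEseg : E = segment ℝ v x := edge_eq_segment hP hv hx hvx hd hE hvE hxE
  have hEP : E ⊆ P := face_subset hE.1
  obtain ⟨g, b, hgle, hEeq⟩ : ∃ (g : (Fin n → ℝ) →ₗ[ℝ] ℝ) (b : ℝ),
      (∀ p ∈ P, g p ≤ b) ∧ E = {p ∈ P | g p = b} := by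
    rcases hE.1 with h | h | h
    · exact absurd (h ▸ hvE) (Set.notMem_empty v)
    · exfalso
      have := hE.2
      rw [h] at this
      omega
    · exact h
  set w : Fin n → ℝ := x - v with hw
  have hwne : w ≠ 0 := sub_ne_zero.2 (Ne.symm hvx)
  -- vector span of the edge
  have hspanE : vectorSpan ℝ E = Submodule.span ℝ {w} := by
    rw [hEseg, ← convexHull_pair, vectorSpan_convexHull', vectorSpan_pair]
    have h1 : v -ᵥ x = -w := by rw [vsub_eq_sub, hw]; abel
    rw [h1]
    rw [← Set.neg_singleton, Submodule.span_neg]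
  -- the midpoint
  set m : Fin n → ℝ := midpoint ℝ v x with hm
  have hmE : m ∈ E := by rw [hEseg]; exact midpoint_mem_segment v x
  have hmP : m ∈ P := hEP hmE
  have hgm : g m = b := by
    rw [hEeq] at hmE
    exact hmE.2
  -- the subspace U
  set V := vectorSpan ℝ P with hV
  set U := (V ⊓ ⨅ F ∈ tA, LinearMap.ker (κ F).1 : Submodule ℝ (Fin n → ℝ)) with hU
  have hUrank : 2 ≤ Module.finrank ℝ U := by
    rw [hU]
    have h1 := finrank_inf_biInf_ker V tA (fun F => (κ F).1)
    have h2 : Module.finrank ℝ V = sdim P := rfl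
    omega
  -- pick u in U outside span w
  have hUne : ¬ (U ≤ Submodule.span ℝ {w}) := by
    intro hle
    have h1 : Module.finrank ℝ U ≤ Module.finrank ℝ (Submodule.span ℝ ({w} : Set (Fin n → ℝ))) :=
      Submodule.finrank_mono hle
    rw [finrank_span_singleton hwne] at h1
    omega
  obtain ⟨u₀, hu₀U, hu₀w⟩ := SetLike.not_le_iff_exists.1 hUne
  clear hUne
  -- membership in A via the midpoint
  have hmemA : ∀ (F : Set (Fin n → ℝ)) (f : (Fin n → ℝ) →ₗ[ℝ] ℝ) (c : ℝ),
      IsFacet P F → (∀ p ∈ P, f p ≤ c) → F = {p ∈ P | f p = c} → m ∈ F → F ∈ A := by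
    intro F f c hFt hsupp hFeq hmF
    rw [hFeq] at hmF
    have := (midpoint_mem_face hsupp hvP hxP hmP).1 hmF
    exact ⟨hFt, by rw [hFeq]; exact this.1, by rw [hFeq]; exact this.2⟩
  -- the key contradiction machine
  have key : ∀ u : Fin n → ℝ, u ∈ U → u ∉ Submodule.span ℝ {w} →
      (∀ t : ℝ, 0 < t → m + t • u ∉ P) → False := by
    intro u huU huw hdir
    have huV : u ∈ V := (Submodule.mem_inf.1 huU).1
    -- any positive multiple gives a violated facet not containing m
    have hstep : ∀ t : ℝ, 0 < t →
        ∃ (F : Set (Fin n → ℝ)) (f : (Fin n → ℝ) →ₗ[ℝ] ℝ) (c : ℝ),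
          IsFacet P F ∧ m ∉ F ∧ (∀ p ∈ P, f p ≤ c) ∧ F = {p ∈ P | f p = c} ∧
          c < f (m + t • u) := by
      intro t ht
      have hyaff : m + t • u ∈ affineSpan ℝ P := by
        have h1 : (t • u) ∈ (affineSpan ℝ P).direction := by
          rw [direction_affineSpan]
          exact Submodule.smul_mem _ t huV
        have h2 := AffineSubspace.vadd_mem_of_mem_direction h1 (subset_affineSpan ℝ P hmP)
        simpa [vadd_eq_add, add_comm] using h2
      obtain ⟨F, f, c, hFt, hsupp, hFeq, hviol⟩ :=
        exists_violated_facet hP hSne hyaff (hdir t ht)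
      refine ⟨F, f, c, hFt, ?_, hsupp, hFeq, hviol⟩
      -- if m ∈ F then F ∈ A and we contradict tightness of κ F at m + t u
      intro hmF
      have hFA : F ∈ A := hmemA F f c hFt hsupp hFeq hmF
      have hFtA : F ∈ tA := by rw [htA, Set.Finite.mem_toFinset]; exact hFA
      obtain ⟨hκsupp, hκeq⟩ := hκ F hFA
      have hκu : (κ F).1 u = 0 := by
        have hle : U ≤ LinearMap.ker (κ F).1 := by
          rw [hU]
          exact inf_le_right.trans (iInf₂_le F hFtA)
        exact hle huU
      have hκm : (κ F).1 m = (κ F).2 := by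
        rw [hκeq] at hmF
        exact hmF.2
      have hκy : (κ F).1 (m + t • u) = (κ F).2 := by
        rw [map_add, map_smul, smul_eq_mul, hκu, hκm]
        ring
      have hsign := facet_functional_sign (face_subset hFt.1) hFt.2.1 hFt.2.2
        hsupp hκsupp hFeq hκeq hyaff hviol
      rw [hκy] at hsign
      exact lt_irrefl _ hsign
    -- facets not containing m
    set B := {F : Set (Fin n → ℝ) | IsFacet P F ∧ m ∉ F} with hB
    have hBfin : B.Finite := (facets_finite hP).subset (fun F hF => hF.1)
    set tB := hBfin.toFinset with htB
    have hchoice' : ∀ F : Set (Fin n → ℝ), ∃ fc : ((Fin n → ℝ) →ₗ[ℝ] ℝ) × ℝ,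
        F ∈ B → (∀ p ∈ P, fc.1 p ≤ fc.2) ∧ F = {p ∈ P | fc.1 p = fc.2} := by
      intro F
      by_cases hF : F ∈ B
      · obtain ⟨f, c, h1, h2⟩ := facet_exposed hP hF.1
        exact ⟨(f, c), fun _ => ⟨h1, h2⟩⟩
      · exact ⟨(0, 0), fun h => absurd h hF⟩
    choose κ' hκ' using hchoice'
    rcases Finset.eq_empty_or_nonempty tB with hBe | hBne
    · -- B is empty: contradiction with t = 1
      obtain ⟨F, f, c, hFt, hmF, -, -, -⟩ := hstep 1 one_pos
      have : F ∈ tB := by rw [htB, Set.Finite.mem_toFinset]; exact ⟨hFt, hmF⟩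
      rw [hBe] at this
      exact absurd this (Finset.notMem_empty F)
    · -- B nonempty: choose t small enough
      set δ := tB.inf' hBne (fun F => (κ' F).2 - (κ' F).1 m) with hδ
      have hδpos : 0 < δ := by
        rw [hδ, Finset.lt_inf'_iff]
        intro F hF
        have hFB : F ∈ B := by rw [htB, Set.Finite.mem_toFinset] at hF; exact hF
        obtain ⟨h1, h2⟩ := hκ' F hFB
        have h3 : (κ' F).1 m ≠ (κ' F).2 := by
          intro he
          exact hFB.2 (by rw [h2]; exact ⟨hmP, he⟩)
        have h4 := h1 m hmP
        cases lt_or_eq_of_le h4 with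
        | inl h => linarith
        | inr h => exact absurd h h3
      set M := tB.sup' hBne (fun F => |(κ' F).1 u|) + 1 with hM
      have hMpos : 0 < M := by
        obtain ⟨F₀, hF₀⟩ := hBne
        have h1 : (0:ℝ) ≤ |(κ' F₀).1 u| := abs_nonneg _
        have h2 := Finset.le_sup' (fun F => |(κ' F).1 u|) hF₀
        rw [hM]
        linarith
      obtain ⟨F, f, c, hFt, hmF, hsupp, hFeq, hviol⟩ := hstep (δ / M) (div_pos hδpos hMpos)
      have hFB : F ∈ B := ⟨hFt, hmF⟩
      have hFtB : F ∈ tB := by rw [htB, Set.Finite.mem_toFinset]; exact hFB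
      obtain ⟨hsupp₂, heq₂⟩ := hκ' F hFB
      -- the chosen functional is not violated
      have hbound : (κ' F).1 (m + (δ / M) • u) < (κ' F).2 := by
        have h1 : δ ≤ (κ' F).2 - (κ' F).1 m := Finset.inf'_le _ hFtB
        have h2 : |(κ' F).1 u| ≤ M - 1 := by
          have := Finset.le_sup' (fun G => |(κ' G).1 u|) hFtB
          rw [hM]; linarith
        have h3 : (δ / M) * (κ' F).1 u ≤ (δ / M) * |(κ' F).1 u| :=
          mul_le_mul_of_nonneg_left (le_abs_self _) (le_of_lt (div_pos hδpos hMpos))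
        have h4 : (δ / M) * |(κ' F).1 u| ≤ (δ / M) * (M - 1) :=
          mul_le_mul_of_nonneg_left h2 (le_of_lt (div_pos hδpos hMpos))
        have h5 : (δ / M) * (M - 1) < δ := by
          rw [mul_sub, div_mul_cancel₀ _ (ne_of_gt hMpos)]
          have : 0 < δ / M := div_pos hδpos hMpos
          linarith
        rw [map_add, map_smul, smul_eq_mul]
        linarith
      have hsign := facet_functional_sign (face_subset hFt.1) hFt.2.1 hFt.2.2
        hsupp hsupp₂ hFeq heq₂ (by
          have h1 : ((δ / M) • u) ∈ (affineSpan ℝ P).direction := by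
            rw [direction_affineSpan]
            exact Submodule.smul_mem _ _ huV
          have h2 := AffineSubspace.vadd_mem_of_mem_direction h1 (subset_affineSpan ℝ P hmP)
          simpa [vadd_eq_add, add_comm] using h2) hviol
      linarith
  -- dichotomy: one of the directions ±u₀ escapes P
  have hboth : ¬ ((∃ t : ℝ, 0 < t ∧ m + t • u₀ ∈ P) ∧ (∃ t : ℝ, 0 < t ∧ m + t • (-u₀) ∈ P)) := by
    rintro ⟨⟨t₁, ht₁, hp₁⟩, ⟨t₂, ht₂, hp₂⟩⟩
    have h1 : g (m + t₁ • u₀) ≤ b := hgle _ hp₁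
    have h2 : g (m + t₂ • (-u₀)) ≤ b := hgle _ hp₂
    rw [map_add, map_smul, smul_eq_mul, hgm] at h1 h2
    rw [map_neg] at h2
    have hgu : g u₀ = 0 := by nlinarith
    -- then m + t₁ u₀ ∈ E, so u₀ ∈ span w
    have hyE : m + t₁ • u₀ ∈ E := by
      rw [hEeq]
      refine ⟨hp₁, ?_⟩
      rw [map_add, map_smul, smul_eq_mul, hgm, hgu]
      ring
    have hy_span : (m + t₁ • u₀) - v ∈ Submodule.span ℝ {w} := by
      rw [← hspanE]
      have := vsub_mem_vectorSpan ℝ hyE hvE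
      simpa [vsub_eq_sub] using this
    have hm_span : m - v ∈ Submodule.span ℝ {w} := by
      rw [← hspanE]
      have := vsub_mem_vectorSpan ℝ hmE hvE
      simpa [vsub_eq_sub] using this
    have htu : t₁ • u₀ ∈ Submodule.span ℝ {w} := by
      have h3 : t₁ • u₀ = ((m + t₁ • u₀) - v) - (m - v) := by abel
      rw [h3]
      exact Submodule.sub_mem _ hy_span hm_span
    have : u₀ ∈ Submodule.span ℝ {w} := by
      have h4 : u₀ = t₁⁻¹ • (t₁ • u₀) := by
        rw [smul_smul, inv_mul_cancel₀ (ne_of_gt ht₁), one_smul]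
      rw [h4]
      exact Submodule.smul_mem _ _ htu
    exact hu₀w this
  by_cases hc1 : ∀ t : ℝ, 0 < t → m + t • u₀ ∉ P
  · exact key u₀ hu₀U hu₀w hc1
  · push_neg at hc1
    obtain ⟨t₁, ht₁, hp₁⟩ := hc1
    have hc2 : ∀ t : ℝ, 0 < t → m + t • (-u₀) ∉ P := by
      intro t ht hp
      exact hboth ⟨⟨t₁, ht₁, hp₁⟩, ⟨t, ht, hp⟩⟩
    apply key (-u₀) (Submodule.neg_mem _ hu₀U) ?_ hc2
    intro h
    exact hu₀w (by simpa using Submodule.neg_mem _ h)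

end K3

theorem stmt7 {n d : ℕ} (hd : 1 < d) (P : Set (Fin n → ℝ))
    (hP : IsPolytope P) (hdim : sdim P = d) (hsimple : IsSimplePolytope P)
    (u v : Fin n → ℝ) (hu : IsVertex P u) (hv : IsVertex P v) (huv : u ≠ v)
    (hcomp : Complementary P u v)
    (x : Fin n → ℝ) (hx : IsVertex P x) (hadj : Adjacent P v x) :
    {F | IsFacet P F ∧ u ∈ F ∧ x ∈ F}.ncard ≤ 1 ∧
    (¬ ∃ F, IsFacet P F ∧ u ∈ F ∧ v ∈ F ∧ x ∈ F) ∧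
    (∃! F₀, IsFacet P F₀ ∧ v ∈ F₀ ∧ x ∉ F₀) ∧
    (∀ F₀, IsFacet P F₀ → v ∈ F₀ → x ∉ F₀ →
      {F | IsFacet P F ∧ (u ∈ F ∨ segment ℝ v x ⊆ F)} =
        {F | IsFacet P F ∧ (u ∈ F ∨ v ∈ F)} \ {F₀}) ∧
    {F | IsFacet P F ∧ (u ∈ F ∨ segment ℝ v x ⊆ F)}.ncard = 2 * d - 1 := by
  obtain ⟨S, hPS⟩ := hP
  have hd2 : 2 ≤ sdim P := by omega
  obtain ⟨hvP, hvS, gv, cv, hgvle, hgveq⟩ := vertex_exposed hPS hv (by omega)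
  obtain ⟨hxP, -, -⟩ := vertex_exposed hPS hx (by omega)
  obtain ⟨hvx, E, hE, hvE, hxE⟩ := hadj
  set Fv := {F : Set (Fin n → ℝ) | IsFacet P F ∧ v ∈ F} with hFvdef
  set Fx := {F : Set (Fin n → ℝ) | IsFacet P F ∧ x ∈ F} with hFxdef
  set Fu := {F : Set (Fin n → ℝ) | IsFacet P F ∧ u ∈ F} with hFudef
  set A := {F : Set (Fin n → ℝ) | IsFacet P F ∧ v ∈ F ∧ x ∈ F} with hAdef
  have hfacfin := facets_finite hPS
  have hFvfin : Fv.Finite := hfacfin.subset (fun F hF => hF.1)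
  have hFxfin : Fx.Finite := hfacfin.subset (fun F hF => hF.1)
  have hFufin : Fu.Finite := hfacfin.subset (fun F hF => hF.1)
  have hAfin : A.Finite := hfacfin.subset (fun F hF => hF.1)
  have hFvcard : Fv.ncard = d := by rw [hFvdef, hsimple v hv, hdim]
  have hFxcard : Fx.ncard = d := by rw [hFxdef, hsimple x hx, hdim]
  have hFucard : Fu.ncard = d := by rw [hFudef, hsimple u hu, hdim]
  have hAFv : A ⊆ Fv := fun F hF => ⟨hF.1, hF.2.1⟩
  have hAFx : A ⊆ Fx := fun F hF => ⟨hF.1, hF.2.2⟩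
  -- lower bound on the number of facets through the edge
  have hK3 : d ≤ A.ncard + 1 := by
    have := edge_facet_lower hPS hd2 hv hx hvx hE hvE hxE
    rw [hdim] at this
    exact this
  -- a facet through v avoiding x
  have hsepv : ∃ F, IsFacet P F ∧ v ∈ F ∧ x ∉ F := by
    have hGne : ({p ∈ P | gv p = cv}).Nonempty := ⟨v, by rw [← hgveq]; rfl⟩
    have hzG : x ∉ {p ∈ P | gv p = cv} := by
      rw [← hgveq]
      intro h
      exact hvx ((h : x = v)).symm
    obtain ⟨F, hF, hsub, hnx⟩ := exists_facet_sep hPS hgvle hGne hxP hzG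
    exact ⟨F, hF, hsub (by rw [← hgveq]; rfl), hnx⟩
  obtain ⟨F₁, hF₁t, hF₁v, hF₁x⟩ := hsepv
  have hF₁Fv : F₁ ∈ Fv := ⟨hF₁t, hF₁v⟩
  -- ncard A = d - 1
  have hAle : A.ncard ≤ d - 1 := by
    have h1 : A ⊆ Fv \ {F₁} := by
      intro F hF
      refine ⟨hAFv hF, ?_⟩
      intro h
      rw [Set.mem_singleton_iff] at h
      subst h
      exact hF₁x hF.2.2
    have h2 : (Fv \ {F₁}).ncard = d - 1 := by
      rw [Set.ncard_diff_singleton_of_mem hF₁Fv, hFvcard]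
    calc A.ncard ≤ (Fv \ {F₁}).ncard := Set.ncard_le_ncard h1 hFvfin.diff
      _ = d - 1 := h2
  have hAcard : A.ncard = d - 1 := by omega
  -- the v-only set is Fv \ A, and has exactly one element
  have hVonly : {F : Set (Fin n → ℝ) | IsFacet P F ∧ v ∈ F ∧ x ∉ F} = Fv \ A := by
    ext F
    simp only [Set.mem_setOf_eq, Set.mem_diff, hFvdef, hAdef]
    constructor
    · rintro ⟨h1, h2, h3⟩
      exact ⟨⟨h1, h2⟩, fun h => h3 h.2.2⟩
    · rintro ⟨⟨h1, h2⟩, h3⟩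
      refine ⟨h1, h2, fun hxF => h3 ⟨h1, h2, hxF⟩⟩
  have hVcard : ({F : Set (Fin n → ℝ) | IsFacet P F ∧ v ∈ F ∧ x ∉ F}).ncard = 1 := by
    rw [hVonly, Set.ncard_diff hAFv hAfin, hFvcard, hAcard]
    omega
  -- similarly, the x-only set
  have hXonly : {F : Set (Fin n → ℝ) | IsFacet P F ∧ x ∈ F ∧ v ∉ F} = Fx \ A := by
    ext F
    simp only [Set.mem_setOf_eq, Set.mem_diff, hFxdef, hAdef]
    constructor
    · rintro ⟨h1, h2, h3⟩
      exact ⟨⟨h1, h2⟩, fun h => h3 h.2.1⟩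
    · rintro ⟨⟨h1, h2⟩, h3⟩
      refine ⟨h1, h2, fun hvF => h3 ⟨h1, hvF, h2⟩⟩
  have hXcard : ({F : Set (Fin n → ℝ) | IsFacet P F ∧ x ∈ F ∧ v ∉ F}).ncard = 1 := by
    rw [hXonly, Set.ncard_diff hAFx hAfin, hFxcard, hAcard]
    omega
  -- segment membership characterisation
  have hseg : ∀ F : Set (Fin n → ℝ), IsFacet P F → (segment ℝ v x ⊆ F ↔ v ∈ F ∧ x ∈ F) := by
    intro F hF
    constructor
    · intro h
      exact ⟨h (left_mem_segment ℝ v x), h (right_mem_segment ℝ v x)⟩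
    · rintro ⟨h1, h2⟩
      exact (face_convex hPS hF.1).segment_subset h1 h2
  -- part 3 existence and uniqueness
  obtain ⟨F₀', hF₀'⟩ := Set.ncard_eq_one.1 hVcard
  have hmemF₀' : IsFacet P F₀' ∧ v ∈ F₀' ∧ x ∉ F₀' := by
    have : F₀' ∈ {F : Set (Fin n → ℝ) | IsFacet P F ∧ v ∈ F ∧ x ∉ F} := by
      rw [hF₀']; rfl
    exact this
  have huniq : ∀ F : Set (Fin n → ℝ), IsFacet P F → v ∈ F → x ∉ F → F = F₀' := by
    intro F h1 h2 h3
    have : F ∈ {F : Set (Fin n → ℝ) | IsFacet P F ∧ v ∈ F ∧ x ∉ F} := ⟨h1, h2, h3⟩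
    rw [hF₀'] at this
    exact this
  refine ⟨?_, ?_, ?_, ?_, ?_⟩
  -- part 1
  · have hsub : {F : Set (Fin n → ℝ) | IsFacet P F ∧ u ∈ F ∧ x ∈ F} ⊆
        {F : Set (Fin n → ℝ) | IsFacet P F ∧ x ∈ F ∧ v ∉ F} := by
      rintro F ⟨h1, h2, h3⟩
      exact ⟨h1, h3, fun hvF => hcomp F h1 ⟨h2, hvF⟩⟩
    have hfin2 : ({F : Set (Fin n → ℝ) | IsFacet P F ∧ x ∈ F ∧ v ∉ F}).Finite := by
      rw [hXonly]
      exact hFxfin.diff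
    calc {F : Set (Fin n → ℝ) | IsFacet P F ∧ u ∈ F ∧ x ∈ F}.ncard
        ≤ ({F : Set (Fin n → ℝ) | IsFacet P F ∧ x ∈ F ∧ v ∉ F}).ncard :=
          Set.ncard_le_ncard hsub hfin2
      _ = 1 := hXcard
  -- part 2
  · rintro ⟨F, hF, huF, hvF, -⟩
    exact hcomp F hF ⟨huF, hvF⟩
  -- part 3
  · exact ⟨F₀', hmemF₀', fun F hF => huniq F hF.1 hF.2.1 hF.2.2⟩
  -- part 4
  · intro F₀ hF₀t hF₀v hF₀x
    have hF₀eq : F₀ = F₀' := huniq F₀ hF₀t hF₀v hF₀x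
    ext F
    simp only [Set.mem_setOf_eq, Set.mem_diff, Set.mem_singleton_iff]
    constructor
    · rintro ⟨h1, h2 | h2⟩
      · refine ⟨⟨h1, Or.inl h2⟩, fun he => ?_⟩
        subst he
        exact hcomp F h1 ⟨h2, hF₀v⟩
      · obtain ⟨hvF, hxF⟩ := (hseg F h1).1 h2
        refine ⟨⟨h1, Or.inr hvF⟩, fun he => ?_⟩
        subst he
        exact hF₀x hxF
    · rintro ⟨⟨h1, h2 | h2⟩, hne⟩
      · exact ⟨h1, Or.inl h2⟩
      · refine ⟨h1, Or.inr ((hseg F h1).2 ⟨h2, ?_⟩)⟩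
        by_contra hxF
        exact hne (by rw [hF₀eq]; exact huniq F h1 h2 hxF)
  -- part 5
  · have hset : {F : Set (Fin n → ℝ) | IsFacet P F ∧ (u ∈ F ∨ segment ℝ v x ⊆ F)} = Fu ∪ A := by
      ext F
      simp only [Set.mem_setOf_eq, Set.mem_union, hFudef, hAdef]
      constructor
      · rintro ⟨h1, h2 | h2⟩
        · exact Or.inl ⟨h1, h2⟩
        · obtain ⟨hvF, hxF⟩ := (hseg F h1).1 h2
          exact Or.inr ⟨h1, hvF, hxF⟩
      · rintro (⟨h1, h2⟩ | ⟨h1, h2, h3⟩)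
        · exact ⟨h1, Or.inl h2⟩
        · exact ⟨h1, Or.inr ((hseg F h1).2 ⟨h2, h3⟩)⟩
    rw [hset]
    have hdisj : Disjoint Fu A := by
      rw [Set.disjoint_left]
      rintro F ⟨h1, h2⟩ ⟨-, h3, -⟩
      exact hcomp F h1 ⟨h2, h3⟩
    rw [Set.ncard_union_eq hdisj hFufin hAfin, hFucard, hAcard]
    omega
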